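/- If G is a graph and Q is a nonempty collection of maximum cliques in G (cliques of size ω(G)), then |⋃Q| + |⋂Q| ≥ 2ω(G), where ⋃Q and ⋂Q denote the union and intersection of all cliques in Q. -/

import Mathlib

open SimpleGraph

lemma hajnal_key {V : Type*} [Fintype V] (G : SimpleGraph V)
    (Q : Set (Finset V)) (hQne : Q.Nonempty)
    (hQ : ∀ s ∈ Q, G.IsNClique G.cliqueNum s) (B : Finset V)
    (hB : G.IsNClique G.cliqueNum B) :
    ((⋃ s ∈ Q, (s : Set V)) ∩ ↑B).ncard + ((⋂ s ∈ Q, (s : Set V)) \ ↑B).ncard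
      ≤ G.cliqueNum := by
  set U : Set V := ⋃ s ∈ Q, (s : Set V) with hU
  set I : Set V := ⋂ s ∈ Q, (s : Set V) with hI
  set S : Set V := (U ∩ ↑B) ∪ (I \ ↑B) with hS
  have hIsub : ∀ s ∈ Q, I ⊆ (s : Set V) := fun s hs =>
    Set.biInter_subset_of_mem hs
  have hclique : G.IsClique S := by
    intro x hx y hy hxy
    rcases hx with ⟨hxU, hxB⟩ | ⟨hxI, hxB⟩ <;>
      rcases hy with ⟨hyU, hyB⟩ | ⟨hyI, hyB⟩
    · exact hB.isClique hxB hyB hxy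
    · obtain ⟨A, hA, hxA⟩ := Set.mem_iUnion₂.mp hxU
      exact (hQ A hA).isClique hxA (hIsub A hA hyI) hxy
    · obtain ⟨A, hA, hyA⟩ := Set.mem_iUnion₂.mp hyU
      exact (hQ A hA).isClique (hIsub A hA hxI) hyA hxy
    · obtain ⟨A, hA⟩ := hQne
      exact (hQ A hA).isClique (hIsub A hA hxI) (hIsub A hA hyI) hxy
  have hdisj : Disjoint (U ∩ ↑B) (I \ ↑B) :=
    Set.disjoint_left.mpr fun x hx hy => hy.2 hx.2
  have hcard : S.ncard ≤ G.cliqueNum := by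
    have hTc : G.IsClique ((Set.toFinite S).toFinset : Set V) := by
      rwa [Set.Finite.coe_toFinset]
    have := @SimpleGraph.IsClique.card_le_cliqueNum V G _ (Set.toFinite S).toFinset hTc
    rwa [Set.ncard_eq_toFinset_card S (Set.toFinite S)]
  rw [hS, Set.ncard_union_eq hdisj (Set.toFinite _) (Set.toFinite _)] at hcard
  exact hcard

/-- Hajnal's lemma: for a nonempty collection `Q` of maximum cliques of `G`,
`|⋃ Q| + |⋂ Q| ≥ 2ω(G)`. -/
theorem hajnal_lemma {V : Type*} [Fintype V] (G : SimpleGraph V)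
    (Q : Set (Finset V)) (hQne : Q.Nonempty)
    (hQ : ∀ s ∈ Q, G.IsNClique G.cliqueNum s) :
    2 * G.cliqueNum ≤ (⋃ s ∈ Q, (s : Set V)).ncard + (⋂ s ∈ Q, (s : Set V)).ncard := by
  revert hQne hQ
  refine Set.Finite.induction_on (motive := fun Q _ => Q.Nonempty →
      (∀ s ∈ Q, G.IsNClique G.cliqueNum s) →
      2 * G.cliqueNum ≤ (⋃ s ∈ Q, (s : Set V)).ncard + (⋂ s ∈ Q, (s : Set V)).ncard)
    Q (Set.toFinite Q) (fun hQne _ => absurd hQne (by simp))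
    (fun {B Q'} hBQ hQ'fin ih hQne hQ => ?_)
  · have hB : G.IsNClique G.cliqueNum B := hQ B (Set.mem_insert _ _)
    have hBcard : (↑B : Set V).ncard = G.cliqueNum := by
      rw [Set.ncard_coe_finset]; exact hB.card_eq
    rcases Q'.eq_empty_or_nonempty with h | hne
    · subst h
      simp only [Set.biUnion_insert, Set.biInter_insert, Set.mem_empty_iff_false,
        Set.iUnion_empty, Set.iUnion_false, Set.union_empty, Set.iInter_false,
        Set.iInter_univ, Set.inter_univ]
      rw [hBcard]; omega
    · have hQ' : ∀ s ∈ Q', G.IsNClique G.cliqueNum s := fun s hs =>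
        hQ s (Set.mem_insert_of_mem _ hs)
      have IH := ih hne hQ'
      set U : Set V := ⋃ s ∈ Q', (s : Set V) with hU
      set I : Set V := ⋂ s ∈ Q', (s : Set V) with hI
      have key := hajnal_key G Q' hne hQ' B hB
      rw [← hU, ← hI] at key
      have e1 : (U ∪ ↑B).ncard + (U ∩ ↑B).ncard = U.ncard + (↑B : Set V).ncard :=
        Set.ncard_union_add_ncard_inter U ↑B (Set.toFinite _) (Set.toFinite _)
      have e2 : (I ∩ ↑B).ncard + (I \ ↑B).ncard = I.ncard :=
        Set.ncard_inter_add_ncard_diff_eq_ncard I ↑B (Set.toFinite _)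
      have goal_eq : (⋃ s ∈ insert B Q', (s : Set V)) = ↑B ∪ U := by
        simp [Set.biUnion_insert, hU]
      have goal_eq2 : (⋂ s ∈ insert B Q', (s : Set V)) = ↑B ∩ I := by
        simp [Set.biInter_insert, hI]
      rw [goal_eq, goal_eq2, Set.union_comm, Set.inter_comm]
      omega
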